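/- A pullback (in the category of groupoids) of a functor satisfying 'injective equivalence' data along an isofibration is again an injective equivalence: concretely, if F : A → B admits S : B → A with S ∘ F = 𝟭_A and a natural isomorphism ε : F ∘ S ≅ 𝟭_B with ε whiskered by F the identity (ε_{F(a)} = id for all a), and p : E → B is an isofibration of groupoids, then the pullback functor F' : A ×_B E → E admits the analogous data. -/

import Mathlib

open CategoryTheory

section

variable {A B E : Type*} [Groupoid A] [Groupoid B] [Groupoid E]

/-- A functor is an isofibration if every isomorphism with source in its image
lifts to an isomorphism with prescribed source. -/
def IsIsofibration {A B : Type*} [Category A] [Category B] (F : A ⥤ B) : Prop :=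
  ∀ (a : A) (b : B) (e : F.obj a ≅ b), ∃ (a' : A) (α : a ≅ a') (h : F.obj a' = b),
    F.map α.hom ≫ eqToHom h = e.hom

/-- The (strict) pullback of groupoids along `F : A ⥤ B` and `p : E ⥤ B`:
pairs `(a, e)` with `F(a) = p(e)`. -/
structure GpdPullback (F : A ⥤ B) (p : E ⥤ B) where
  pt : A
  fib : E
  eq : F.obj pt = p.obj fib

/-- Morphisms in the pullback groupoid: compatible pairs of morphisms. -/
@[ext]
structure GpdPullbackHom {F : A ⥤ B} {p : E ⥤ B} (x y : GpdPullback F p) where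
  base : x.pt ⟶ y.pt
  total : x.fib ⟶ y.fib
  w : F.map base ≫ eqToHom y.eq = eqToHom x.eq ≫ p.map total

instance (F : A ⥤ B) (p : E ⥤ B) : Category (GpdPullback F p) where
  Hom := GpdPullbackHom
  id x := ⟨𝟙 _, 𝟙 _, by simp⟩
  comp f g := ⟨f.base ≫ g.base, f.total ≫ g.total, by
    rw [Functor.map_comp, Functor.map_comp, Category.assoc, g.w, ← Category.assoc, f.w,
      Category.assoc]⟩
  id_comp f := GpdPullbackHom.ext (Category.id_comp _) (Category.id_comp _)
  comp_id f := GpdPullbackHom.ext (Category.comp_id _) (Category.comp_id _)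
  assoc f g h := GpdPullbackHom.ext (Category.assoc _ _ _) (Category.assoc _ _ _)

/-- The pullback `F' : A ×_B E ⥤ E` of `F` along `p`. -/
def pbSnd (F : A ⥤ B) (p : E ⥤ B) : GpdPullback F p ⥤ E where
  obj x := x.fib
  map f := f.total
  map_id _ := rfl
  map_comp _ _ := rfl


-- AUX START
theorem GpdPullback.ext' {F : A ⥤ B} {p : E ⥤ B} {x y : GpdPullback F p}
    (h1 : x.pt = y.pt) (h2 : x.fib = y.fib) : x = y := by
  cases x; cases y; cases h1; cases h2; rfl

theorem GpdPullback.eqToHom_base {F : A ⥤ B} {p : E ⥤ B} {x y : GpdPullback F p}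
    (h : x = y) : (eqToHom h).base = eqToHom (congrArg GpdPullback.pt h) := by
  subst h; rfl

theorem GpdPullback.eqToHom_total {F : A ⥤ B} {p : E ⥤ B} {x y : GpdPullback F p}
    (h : x = y) : (eqToHom h).total = eqToHom (congrArg GpdPullback.fib h) := by
  subst h; rfl

@[simp] theorem GpdPullback.id_base {F : A ⥤ B} {p : E ⥤ B} (x : GpdPullback F p) :
    (𝟙 x : x ⟶ x).base = 𝟙 x.pt := rfl
@[simp] theorem GpdPullback.id_total {F : A ⥤ B} {p : E ⥤ B} (x : GpdPullback F p) :
    (𝟙 x : x ⟶ x).total = 𝟙 x.fib := rfl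
@[simp] theorem GpdPullback.comp_base {F : A ⥤ B} {p : E ⥤ B} {x y z : GpdPullback F p}
    (f : x ⟶ y) (g : y ⟶ z) : (f ≫ g).base = f.base ≫ g.base := rfl
@[simp] theorem GpdPullback.comp_total {F : A ⥤ B} {p : E ⥤ B} {x y z : GpdPullback F p}
    (f : x ⟶ y) (g : y ⟶ z) : (f ≫ g).total = f.total ≫ g.total := rfl

variable (F : A ⥤ B) (p : E ⥤ B) (S : B ⥤ A)

structure LiftData (ε : S ⋙ F ≅ 𝟭 B) (e : E) where
  e' : E
  α : e ≅ e'
  h : p.obj e' = F.obj (S.obj (p.obj e))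
  w : p.map α.hom ≫ eqToHom h = (ε.app (p.obj e)).inv

theorem app_conj (ε : S ⋙ F ≅ 𝟭 B) {b b' : B} (h : b = b') :
    ε.hom.app b = eqToHom (congrArg (S ⋙ F).obj h) ≫ ε.hom.app b' ≫ eqToHom h.symm := by
  subst h; simp

theorem eps_eqToIso (hSF : F ⋙ S = 𝟭 A) (ε : S ⋙ F ≅ 𝟭 B)
    (hnorm : ∀ a : A, ε.hom.app (F.obj a) =
      eqToHom (congrArg F.obj (Functor.congr_obj hSF a)))
    (e : E) (c : p.obj e = F.obj (S.obj (p.obj e))) :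
    ε.app (p.obj e) = eqToIso c.symm := by
  apply Iso.ext
  simp only [Iso.app_hom, eqToIso.hom]
  rw [app_conj F S ε c, hnorm]
  simp

noncomputable def liftE (hSF : F ⋙ S = 𝟭 A) (ε : S ⋙ F ≅ 𝟭 B)
    (hnorm : ∀ a : A, ε.hom.app (F.obj a) =
      eqToHom (congrArg F.obj (Functor.congr_obj hSF a)))
    (hp : IsIsofibration p) (e : E) : LiftData F p S ε e := by
  classical
  by_cases c : p.obj e = F.obj (S.obj (p.obj e))
  · refine ⟨e, Iso.refl e, c, ?_⟩
    rw [eps_eqToIso F p S hSF ε hnorm e c]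
    simp
  · have hx := hp e (F.obj (S.obj (p.obj e))) (ε.app (p.obj e)).symm
    exact ⟨hx.choose, hx.choose_spec.choose, hx.choose_spec.choose_spec.choose,
      hx.choose_spec.choose_spec.choose_spec⟩

theorem liftE_pos (hSF : F ⋙ S = 𝟭 A) (ε : S ⋙ F ≅ 𝟭 B)
    (hnorm : ∀ a : A, ε.hom.app (F.obj a) =
      eqToHom (congrArg F.obj (Functor.congr_obj hSF a)))
    (hp : IsIsofibration p) (e : E) (c : p.obj e = F.obj (S.obj (p.obj e))) :
    liftE F p S hSF ε hnorm hp e = ⟨e, Iso.refl e, c, by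
      rw [eps_eqToIso F p S hSF ε hnorm e c]; simp⟩ := by
  unfold liftE
  rw [dif_pos c]

theorem liftE_pos_e' (hSF : F ⋙ S = 𝟭 A) (ε : S ⋙ F ≅ 𝟭 B)
    (hnorm : ∀ a : A, ε.hom.app (F.obj a) =
      eqToHom (congrArg F.obj (Functor.congr_obj hSF a)))
    (hp : IsIsofibration p) (e : E) (c : p.obj e = F.obj (S.obj (p.obj e))) :
    (liftE F p S hSF ε hnorm hp e).e' = e := by
  rw [liftE_pos F p S hSF ε hnorm hp e c]

theorem liftE_pos_heq (hSF : F ⋙ S = 𝟭 A) (ε : S ⋙ F ≅ 𝟭 B)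
    (hnorm : ∀ a : A, ε.hom.app (F.obj a) =
      eqToHom (congrArg F.obj (Functor.congr_obj hSF a)))
    (hp : IsIsofibration p) (e : E) (c : p.obj e = F.obj (S.obj (p.obj e))) :
    HEq (liftE F p S hSF ε hnorm hp e).α (Iso.refl e) := by
  rw [liftE_pos F p S hSF ε hnorm hp e c]

theorem hom_eq_of_heq {a b : E} (i : a ≅ b) (hb : a = b) (hi : HEq i (Iso.refl a)) :
    i.hom = eqToHom hb := by
  subst hb; rw [eq_of_heq hi]; simp

theorem inv_eq_of_heq {a b : E} (i : a ≅ b) (hb : b = a) (hi : HEq i (Iso.refl a)) :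
    i.inv = eqToHom hb := by
  have : a = b := hb.symm
  subst this; rw [eq_of_heq hi]; simp

theorem liftE_map_hom (hSF : F ⋙ S = 𝟭 A) (ε : S ⋙ F ≅ 𝟭 B)
    (hnorm : ∀ a : A, ε.hom.app (F.obj a) =
      eqToHom (congrArg F.obj (Functor.congr_obj hSF a)))
    (hp : IsIsofibration p) (e : E) :
    p.map (liftE F p S hSF ε hnorm hp e).α.hom =
      (ε.app (p.obj e)).inv ≫ eqToHom (liftE F p S hSF ε hnorm hp e).h.symm := by
  rw [← (liftE F p S hSF ε hnorm hp e).w]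
  simp

theorem liftE_map_inv (hSF : F ⋙ S = 𝟭 A) (ε : S ⋙ F ≅ 𝟭 B)
    (hnorm : ∀ a : A, ε.hom.app (F.obj a) =
      eqToHom (congrArg F.obj (Functor.congr_obj hSF a)))
    (hp : IsIsofibration p) (e : E) :
    p.map (liftE F p S hSF ε hnorm hp e).α.inv =
      eqToHom (liftE F p S hSF ε hnorm hp e).h ≫ (ε.app (p.obj e)).hom := by
  set L := liftE F p S hSF ε hnorm hp e
  have h2 : p.map L.α.inv ≫ (p.map L.α.hom ≫ eqToHom L.h) = eqToHom L.h := by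
    rw [← Category.assoc, ← p.map_comp, Iso.inv_hom_id, p.map_id, Category.id_comp]
  rw [L.w] at h2
  rw [← h2]
  simp

noncomputable def Sprime (hSF : F ⋙ S = 𝟭 A) (ε : S ⋙ F ≅ 𝟭 B)
    (hnorm : ∀ a : A, ε.hom.app (F.obj a) =
      eqToHom (congrArg F.obj (Functor.congr_obj hSF a)))
    (hp : IsIsofibration p) : E ⥤ GpdPullback F p where
  obj e := ⟨S.obj (p.obj e), (liftE F p S hSF ε hnorm hp e).e',
    (liftE F p S hSF ε hnorm hp e).h.symm⟩
  map {e₁ e₂} f := ⟨S.map (p.map f),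
    (liftE F p S hSF ε hnorm hp e₁).α.inv ≫ f ≫ (liftE F p S hSF ε hnorm hp e₂).α.hom, by
      rw [p.map_comp, p.map_comp, liftE_map_inv F p S hSF ε hnorm hp e₁,
        liftE_map_hom F p S hSF ε hnorm hp e₂]
      simp only [Iso.app_hom, Iso.app_inv]
      have hnat := ε.hom.naturality (p.map f)
      simp only [Functor.comp_map, Functor.id_map] at hnat
      have key : ∀ {Z : B} (k : F.obj (S.obj (p.obj e₂)) ⟶ Z),
          ε.hom.app (p.obj e₁) ≫ p.map f ≫ ε.inv.app (p.obj e₂) ≫ k =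
          F.map (S.map (p.map f)) ≫ k := by
        intro Z k
        rw [← Category.assoc, ← Category.assoc, ← hnat]
        simp
      simp only [Category.assoc, eqToHom_trans_assoc, eqToHom_refl, Category.id_comp]
      rw [key]⟩
  map_id e := by
    apply GpdPullbackHom.ext <;> simp
  map_comp f g := by
    apply GpdPullbackHom.ext <;> simp
-- AUX END

/-- The pullback of an injective equivalence along an isofibration of groupoids
again carries injective equivalence data. -/
theorem pullback_injective_equivalence (F : A ⥤ B) (p : E ⥤ B)
    (S : B ⥤ A) (hSF : F ⋙ S = 𝟭 A) (ε : S ⋙ F ≅ 𝟭 B)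
    (hnorm : ∀ a : A, ε.hom.app (F.obj a) =
      eqToHom (congrArg F.obj (Functor.congr_obj hSF a)))
    (hp : IsIsofibration p) :
    ∃ (S' : E ⥤ GpdPullback F p)
      (hr : pbSnd F p ⋙ S' = 𝟭 (GpdPullback F p))
      (ε' : S' ⋙ pbSnd F p ≅ 𝟭 E),
      ∀ x : GpdPullback F p, ε'.hom.app ((pbSnd F p).obj x) =
        eqToHom (congrArg (pbSnd F p).obj (Functor.congr_obj hr x)) := by
  have cx : ∀ x : GpdPullback F p, p.obj x.fib = F.obj (S.obj (p.obj x.fib)) := fun x => by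
    rw [← x.eq]
    exact (congrArg F.obj (Functor.congr_obj hSF x.pt)).symm
  refine ⟨Sprime F p S hSF ε hnorm hp, ?_, ?_, ?_⟩
  · -- strict retraction
    have hobj : ∀ x : GpdPullback F p,
        (pbSnd F p ⋙ Sprime F p S hSF ε hnorm hp).obj x = (𝟭 (GpdPullback F p)).obj x := by
      intro x
      apply GpdPullback.ext'
      · show S.obj (p.obj x.fib) = x.pt
        rw [← x.eq]
        exact Functor.congr_obj hSF x.pt
      · exact liftE_pos_e' F p S hSF ε hnorm hp x.fib (cx x)
    refine CategoryTheory.Functor.ext hobj fun x y f => ?_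
    apply GpdPullbackHom.ext
    · show S.map (p.map f.total) = _
      have hw : p.map f.total = eqToHom x.eq.symm ≫ F.map f.base ≫ eqToHom y.eq := by
        rw [f.w]; simp
      have hc := Functor.congr_hom hSF f.base
      simp only [Functor.comp_map, Functor.id_map] at hc
      simp [hw, hc, eqToHom_map, GpdPullback.eqToHom_base, eqToHom_trans]
      rfl
    · show (liftE F p S hSF ε hnorm hp x.fib).α.inv ≫ f.total ≫
        (liftE F p S hSF ε hnorm hp y.fib).α.hom = _
      rw [inv_eq_of_heq _ (liftE_pos_e' F p S hSF ε hnorm hp x.fib (cx x))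
          (liftE_pos_heq F p S hSF ε hnorm hp x.fib (cx x)),
        hom_eq_of_heq _ (liftE_pos_e' F p S hSF ε hnorm hp y.fib (cx y)).symm
          (liftE_pos_heq F p S hSF ε hnorm hp y.fib (cx y))]
      simp [GpdPullback.eqToHom_total]
      rfl
  · -- the natural isomorphism
    exact NatIso.ofComponents
      (fun e => ((liftE F p S hSF ε hnorm hp e).α).symm)
      (fun {e₁ e₂} f => by
        show ((liftE F p S hSF ε hnorm hp e₁).α.inv ≫ f ≫
            (liftE F p S hSF ε hnorm hp e₂).α.hom) ≫ _ = _
        simp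
        rfl)
  · -- whiskering condition
    intro x
    show ((liftE F p S hSF ε hnorm hp x.fib).α).symm.hom = _
    rw [Iso.symm_hom, inv_eq_of_heq _ (liftE_pos_e' F p S hSF ε hnorm hp x.fib (cx x))
      (liftE_pos_heq F p S hSF ε hnorm hp x.fib (cx x))]
    rfl

end
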